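/- Let n ≥ m ≥ 1, let p > n be a prime, let V be an m-certificate, and let M be an n×n integer matrix with at most m² nonzero entries. If row i of M is nonzero but not V-detectable (i.e., the i-th row of MV is zero), then there exists an index j such that M_{ij} ≠ 0 and column j of M is V-detectable (i.e., the j-th column of MᵀV is nonzero). -/

import Mathlib

open Matrix

/-- Mod-p Vandermonde: a vector over `ZMod p` with support of size `≤ m`
annihilating the Vandermonde-type matrix must be zero. -/
lemma vand_aux (n m p : ℕ) (hmn : m ≤ n) (hnp : n < p) [Fact p.Prime]
    (c : Fin n → ZMod p)
    (hsupp : (Finset.univ.filter fun k => c k ≠ 0).card ≤ m)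
    (h : ∀ j : Fin m, ∑ k, c k * (((k : ℕ) : ZMod p) + 1) ^ (j : ℕ) = 0) :
    c = 0 := by
  obtain ⟨T, hST, hT⟩ := Finset.exists_superset_card_eq hsupp (by simpa using hmn)
  have hczero : ∀ k, k ∉ T → c k = 0 := by
    intro k hk
    by_contra hc
    exact hk (hST (by simp [hc]))
  let e : {x // x ∈ T} ≃ Fin m := T.equivFinOfCardEq hT
  let x : Fin m → ZMod p := fun a => (((e.symm a : Fin n) : ℕ) : ZMod p) + 1
  have hxinj : Function.Injective x := by
    intro a b hab
    have h1 : (((e.symm a : Fin n) : ℕ) : ZMod p) = (((e.symm b : Fin n) : ℕ) : ZMod p) := by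
      simpa [x] using hab
    have h2 : ((e.symm a : Fin n) : ℕ) = ((e.symm b : Fin n) : ℕ) := by
      have := congrArg ZMod.val h1
      rwa [ZMod.val_cast_of_lt (lt_trans (e.symm a : Fin n).2 hnp),
        ZMod.val_cast_of_lt (lt_trans (e.symm b : Fin n).2 hnp)] at this
    have : (e.symm a : Fin n) = (e.symm b : Fin n) := Fin.val_injective h2
    exact e.symm.injective (Subtype.ext this)
  have hdet : IsUnit (Matrix.vandermonde x).det := by
    rw [isUnit_iff_ne_zero, Matrix.det_vandermonde]
    rw [Finset.prod_ne_zero_iff]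
    intro a _
    rw [Finset.prod_ne_zero_iff]
    intro b hb
    rw [sub_ne_zero]
    exact fun hxy => (Finset.mem_Ioi.mp hb).ne' (hxinj hxy)
  set d : Fin m → ZMod p := fun a => c (e.symm a) with hd_def
  have hdA : d ᵥ* Matrix.vandermonde x = 0 := by
    funext j
    have : (d ᵥ* Matrix.vandermonde x) j = ∑ a : Fin m, d a * x a ^ (j : ℕ) := by
      simp [Matrix.vecMul, dotProduct, Matrix.vandermonde]
    rw [this]
    set f : Fin n → ZMod p := fun k => c k * (((k : ℕ) : ZMod p) + 1) ^ (j : ℕ) with hf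
    have h1 : ∑ a : Fin m, d a * x a ^ (j : ℕ)
        = ∑ t : {x // x ∈ T}, f (t : Fin n) :=
      Equiv.sum_comp e.symm (fun t : {x // x ∈ T} => f (t : Fin n))
    have h2 : ∑ t : {x // x ∈ T}, f (t : Fin n) = ∑ k ∈ T, f k :=
      Finset.sum_coe_sort T f
    have h3 : ∑ k ∈ T, f k = ∑ k, f k :=
      Finset.sum_subset (Finset.subset_univ T)
        (fun k _ hk => by simp only [hf]; rw [hczero k hk]; ring)
    rw [h1, h2, h3]
    have := h j
    simpa [hf] using this
  have hd0 : d = 0 := by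
    calc d = d ᵥ* (1 : Matrix (Fin m) (Fin m) (ZMod p)) := by rw [Matrix.vecMul_one]
    _ = d ᵥ* (Matrix.vandermonde x * (Matrix.vandermonde x)⁻¹) := by
        rw [Matrix.mul_nonsing_inv _ hdet]
    _ = (d ᵥ* Matrix.vandermonde x) ᵥ* (Matrix.vandermonde x)⁻¹ := by
        rw [Matrix.vecMul_vecMul]
    _ = 0 := by rw [hdA, Matrix.zero_vecMul]
  have hzero : ∀ k, c k = 0 := by
    intro k
    by_contra hk
    have hkT : k ∈ T := hST (by simp [hk])
    have h4 : c k = d (e ⟨k, hkT⟩) := by simp [hd_def]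
    rw [h4, hd0] at hk
    simp at hk
  funext k
  exact hzero k

/-- Descent: integer vector with small support annihilating `V` is divisible by all `p^t`. -/
lemma desc_aux (n m p : ℕ) (hmn : m ≤ n) (hp : p.Prime) (hnp : n < p)
    (V : Matrix (Fin n) (Fin m) ℤ)
    (hV_mod : ∀ i j, V i j ≡ ((i : ℤ) + 1) ^ (j : ℕ) [ZMOD (p : ℤ)]) :
    ∀ t : ℕ, ∀ u : Fin n → ℤ,
      (Finset.univ.filter fun k => u k ≠ 0).card ≤ m →
      (∀ j : Fin m, ∑ k, u k * V k j = 0) →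
      ∀ k, (p : ℤ) ^ t ∣ u k := by
  intro t
  induction t with
  | zero => intro u _ _ k; simp
  | succ t ih =>
    intro u hsupp hsum k
    haveI : Fact p.Prime := ⟨hp⟩
    have hdvd : ∀ k, (p : ℤ) ∣ u k := by
      have hc : (fun k : Fin n => ((u k : ZMod p))) = 0 := by
        apply vand_aux n m p hmn hnp
        · refine le_trans (Finset.card_le_card ?_) hsupp
          intro x hx
          simp only [Finset.mem_filter, Finset.mem_univ, true_and] at hx ⊢
          intro h0
          exact hx (by simp [h0])
        · intro j
          have h0 := hsum j
          have : ((∑ k, u k * V k j : ℤ) : ZMod p) = 0 := by rw [h0]; simp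
          rw [← this]
          push_cast
          apply Finset.sum_congr rfl
          intro k _
          congr 1
          have := (ZMod.intCast_eq_intCast_iff _ _ _).mpr (hV_mod k j)
          rw [this]
          push_cast
          ring
      intro k'
      have := congrFun hc k'
      exact (ZMod.intCast_zmod_eq_zero_iff_dvd _ _).mp this
    set u' : Fin n → ℤ := fun k => u k / p with hu'
    have hmul : ∀ k, u k = p * u' k := by
      intro k
      exact (Int.mul_ediv_cancel' (hdvd k)).symm
    have h1 : (p : ℤ) ^ t ∣ u' k := by
      apply ih
      · refine le_trans (Finset.card_le_card ?_) hsupp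
        intro x hx
        simp only [Finset.mem_filter, Finset.mem_univ, true_and] at hx ⊢
        intro h0
        exact hx (by simp [hu', h0])
      · intro j
        have h0 := hsum j
        have hp0 : (p : ℤ) ≠ 0 := by exact_mod_cast hp.ne_zero
        have : (p : ℤ) * ∑ k, u' k * V k j = 0 := by
          rw [Finset.mul_sum]
          rw [← h0]
          apply Finset.sum_congr rfl
          intro k' _
          rw [hmul k']; ring
        rcases mul_eq_zero.mp this with h | h
        · exact absurd h hp0
        · exact h
    rw [hmul k, pow_succ, mul_comm ((p:ℤ)^t) (p:ℤ)]
    exact mul_dvd_mul_left _ h1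

/-- Key lemma: a nonzero integer vector with support of size `≤ m` is `V`-detectable. -/
lemma key_aux (n m p : ℕ) (hmn : m ≤ n) (hp : p.Prime) (hnp : n < p)
    (V : Matrix (Fin n) (Fin m) ℤ)
    (hV_mod : ∀ i j, V i j ≡ ((i : ℤ) + 1) ^ (j : ℕ) [ZMOD (p : ℤ)])
    (u : Fin n → ℤ)
    (hsupp : (Finset.univ.filter fun k => u k ≠ 0).card ≤ m)
    (hsum : ∀ j : Fin m, ∑ k, u k * V k j = 0) :
    u = 0 := by
  funext k
  by_contra hk
  have habs : 0 < |u k| := abs_pos.mpr hk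
  set t := (u k).natAbs with ht
  have hdvd : (p : ℤ) ^ t ∣ u k := desc_aux n m p hmn hp hnp V hV_mod t u hsupp hsum k
  have hle : (p : ℤ) ^ t ≤ |u k| := Int.le_of_dvd habs ((dvd_abs _ _).mpr hdvd)
  have h2 : (2 : ℤ) ^ t ≤ (p : ℤ) ^ t := by
    apply pow_le_pow_left₀ (by norm_num)
    exact_mod_cast hp.two_le
  have h3 : (t : ℤ) < 2 ^ t := by exact_mod_cast (Nat.lt_two_pow_self (n := t))
  have : |u k| = (t : ℤ) := by rw [ht]; exact (Int.abs_eq_natAbs _)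
  omega

theorem stmt_8 (n m p : ℕ) (hm : 1 ≤ m) (hmn : m ≤ n) (hp : p.Prime) (hnp : n < p)
    (V : Matrix (Fin n) (Fin m) ℤ)
    (hV_range : ∀ i j, 0 ≤ V i j ∧ V i j < p)
    (hV_mod : ∀ i j, V i j ≡ ((i : ℤ) + 1) ^ (j : ℕ) [ZMOD (p : ℤ)])
    (M : Matrix (Fin n) (Fin n) ℤ)
    (hcard : (Finset.univ.filter
      fun q : Fin n × Fin n => M q.1 q.2 ≠ 0).card ≤ m ^ 2)
    (i : Fin n)
    (hrow_nonzero : M i ≠ 0)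
    (hrow_undetected : (M * V) i = 0) :
    ∃ j, M i j ≠ 0 ∧ (Mᵀ * V) j ≠ 0 := by
  by_contra hcon
  push_neg at hcon
  set R := Finset.univ.filter fun j => M i j ≠ 0 with hR
  have hRcard : m + 1 ≤ R.card := by
    by_contra h
    push_neg at h
    apply hrow_nonzero
    apply key_aux n m p hmn hp hnp V hV_mod (M i) (Nat.lt_succ_iff.mp h)
    intro j
    have := congrFun hrow_undetected j
    simpa [Matrix.mul_apply] using this
  have hcol : ∀ j ∈ R, m + 1 ≤ (Finset.univ.filter fun k => M k j ≠ 0).card := by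
    intro j hj
    have hij : M i j ≠ 0 := by simpa [hR] using hj
    by_contra h
    push_neg at h
    have hz := hcon j hij
    have hcol0 : (fun k => M k j) = 0 := by
      apply key_aux n m p hmn hp hnp V hV_mod _ (Nat.lt_succ_iff.mp h)
      intro j'
      have := congrFun hz j'
      simpa [Matrix.mul_apply, Matrix.transpose_apply] using this
    exact hij (congrFun hcol0 i)
  -- Counting argument
  set colS : Fin n → Finset (Fin n × Fin n) :=
    fun j => (Finset.univ.filter fun k => M k j ≠ 0).image (fun k => (k, j)) with hcolS
  have hcardimg : ∀ j, (colS j).card = (Finset.univ.filter fun k => M k j ≠ 0).card := by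
    intro j
    apply Finset.card_image_of_injective
    intro a b hab
    exact (Prod.mk.injEq _ _ _ _).mp hab |>.1
  have hsum : ∑ j ∈ R, (Finset.univ.filter fun k => M k j ≠ 0).card
      ≤ (Finset.univ.filter fun q : Fin n × Fin n => M q.1 q.2 ≠ 0).card := by
    have hdisj : ∀ a ∈ R, ∀ b ∈ R, a ≠ b → Disjoint (colS a) (colS b) := by
      intro a _ b _ hab
      apply Finset.disjoint_left.mpr
      intro q hqa hqb
      simp only [hcolS, Finset.mem_image, Finset.mem_filter, Finset.mem_univ, true_and] at hqa hqb
      obtain ⟨k1, _, hk1⟩ := hqa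
      obtain ⟨k2, _, hk2⟩ := hqb
      exact hab (by rw [← hk1] at hk2; exact ((Prod.mk.injEq _ _ _ _).mp hk2 |>.2).symm)
    calc ∑ j ∈ R, (Finset.univ.filter fun k => M k j ≠ 0).card
        = ∑ j ∈ R, (colS j).card := by
          exact Finset.sum_congr rfl fun j _ => (hcardimg j).symm
    _ = (R.biUnion colS).card := (Finset.card_biUnion hdisj).symm
    _ ≤ _ := by
        apply Finset.card_le_card
        intro q hq
        simp only [Finset.mem_biUnion, hcolS, Finset.mem_image, Finset.mem_filter,
          Finset.mem_univ, true_and] at hq ⊢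
        obtain ⟨j, _, k, hk, hkq⟩ := hq
        rw [← hkq]
        exact hk
  have hlow : (m + 1) * (m + 1) ≤ ∑ j ∈ R, (Finset.univ.filter fun k => M k j ≠ 0).card := by
    calc (m + 1) * (m + 1) ≤ R.card * (m + 1) := by
          exact Nat.mul_le_mul_right _ hRcard
    _ = R.card • (m + 1) := by simp
    _ ≤ _ := Finset.card_nsmul_le_sum R _ _ hcol
  have : (m + 1) * (m + 1) ≤ m ^ 2 := le_trans hlow (le_trans hsum hcard)
  nlinarith
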